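/- The map φ : ℂ[X,Y,S]/(SX²−Y²+1) → ℂ[u^{±1}, b], X ↦ u⁻¹, Y ↦ −b u⁻¹, S ↦ b² + u², is a Poisson algebra homomorphism, where the source has the bracket {S,X}=Y, {S,Y}=SX, {X,Y}=−X²/2, and the target has the canonical bracket with {b, γ} = γ for γ = u², i.e. {b, u} = u/2 and {u, u} = {b, b} = 0. -/
import Mathlib


open MvPolynomial

/-- Images of the generators `X, Y, S` under the free field realization map
`φ : X ↦ u⁻¹, Y ↦ −b·u⁻¹, S ↦ b² + u²`, in `ℂ[u^{±1}, b]` realized as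
`Polynomial (LaurentPolynomial ℂ)` with `u = C (T 1)` and `b = Polynomial.X`. -/
noncomputable def φX : Polynomial (LaurentPolynomial ℂ) :=
  Polynomial.C (LaurentPolynomial.T (-1))

noncomputable def φY : Polynomial (LaurentPolynomial ℂ) :=
  -(Polynomial.X * Polynomial.C (LaurentPolynomial.T (-1)))

noncomputable def φS : Polynomial (LaurentPolynomial ℂ) :=
  Polynomial.X ^ 2 + Polynomial.C (LaurentPolynomial.T 2)

/-- The map `φ : X ↦ u⁻¹, Y ↦ −b·u⁻¹, S ↦ b² + u²` is a Poisson homomorphism: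
for any `ℂ`-bilinear antisymmetric Leibniz bracket `Q` on `ℂ[u^{±1}, b]` with
`{b, u} = u/2` and `{u,u} = {b,b} = 0`, one has `{φ(S), φ(X)} = φ(Y)`,
`{φ(S), φ(Y)} = φ(S)·φ(X)` and `{φ(X), φ(Y)} = −φ(X)²/2`, matching the
source bracket `{S,X} = Y`, `{S,Y} = S·X`, `{X,Y} = −X²/2`. -/
theorem stmt10
    (Q : Polynomial (LaurentPolynomial ℂ) →ₗ[ℂ]
        Polynomial (LaurentPolynomial ℂ) →ₗ[ℂ] Polynomial (LaurentPolynomial ℂ))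
    (hanti : ∀ p q, Q p q = -Q q p)
    (hleib : ∀ p q r, Q (p * q) r = p * Q q r + q * Q p r)
    (hbu : Q Polynomial.X (Polynomial.C (LaurentPolynomial.T 1)) =
      ((1 : ℂ) / 2) • Polynomial.C (LaurentPolynomial.T 1))
    (huu : Q (Polynomial.C (LaurentPolynomial.T 1))
      (Polynomial.C (LaurentPolynomial.T 1)) = 0)
    (hbb : Q Polynomial.X Polynomial.X = 0) :
    Q φS φX = φY ∧ Q φS φY = φS * φX ∧
      Q φX φY = -(((1 : ℂ) / 2) • (φX ^ 2)) := by

  classical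
  set b := (Polynomial.X : Polynomial (LaurentPolynomial ℂ)) with hb
  set u := (Polynomial.C (LaurentPolynomial.T (1:ℤ)) : Polynomial (LaurentPolynomial ℂ)) with hu
  set v := (Polynomial.C (LaurentPolynomial.T (-1:ℤ)) : Polynomial (LaurentPolynomial ℂ)) with hv
  set μ := (Polynomial.C (LaurentPolynomial.C ((1:ℂ)/2)) : Polynomial (LaurentPolynomial ℂ)) with hμ
  have huv : v * u = 1 := by
    rw [hu, hv, ← Polynomial.C_mul, ← LaurentPolynomial.T_add]
    norm_num
  have hμ2 : μ + μ = 1 := by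
    rw [hμ, ← Polynomial.C_add, ← map_add]
    norm_num
  have hsm : ∀ p : Polynomial (LaurentPolynomial ℂ), ((1:ℂ)/2) • p = μ * p := by
    intro p
    rw [hμ, Polynomial.C_mul']
    rw [show (LaurentPolynomial.C ((1:ℂ)/2)) = ((1:ℂ)/2) • (1 : LaurentPolynomial ℂ) by
      rw [← Algebra.algebraMap_eq_smul_one, ← LaurentPolynomial.C_eq_algebraMap]]
    rw [smul_assoc, one_smul]
  have hT2 : (Polynomial.C (LaurentPolynomial.T (2:ℤ)) : Polynomial (LaurentPolynomial ℂ)) = u * u := by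
    rw [hu, ← Polynomial.C_mul, ← LaurentPolynomial.T_add]
    norm_num
  have hleib2 : ∀ p q r, Q r (p * q) = p * Q r q + q * Q r p := by
    intro p q r
    rw [hanti r (p*q), hleib, hanti q r, hanti p r]
    ring
  have hone2 : ∀ r, Q r 1 = 0 := by
    intro r
    have h := hleib 1 1 r
    rw [one_mul, one_mul] at h
    have h2 : Q 1 r = 0 := by linear_combination -h
    rw [hanti, h2, neg_zero]
  -- bracket values on generators
  have hbu' : Q b u = μ * u := by rw [hbu, hsm]
  have hbv : Q b v = -(μ * v) := by
    have h := hleib2 v u b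
    rw [huv, hone2, hbu'] at h
    linear_combination (-v) * h + (-(Q b v + μ * v)) * huv
  have huv0 : Q u v = 0 := by
    have h := hleib2 v u u
    rw [huv, hone2, huu] at h
    linear_combination (-v) * h + (-(Q u v)) * huv
  have hvu0 : Q v u = 0 := by rw [hanti, huv0, neg_zero]
  have hvb : Q v b = μ * v := by rw [hanti, hbv, neg_neg]
  have hub : Q u b = -(μ * u) := by rw [hanti, hbu']
  have hvv : Q v v = 0 := by
    have h := hanti v v
    have h2 : Q v v + Q v v = 0 := by linear_combination h
    linear_combination μ * h2 - Q v v * hμ2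
  have hφS : φS = b * b + u * u := by rw [φS, hT2, hb, sq]
  have hφX : φX = v := by rw [φX, hv]
  have hφY : φY = -(b * v) := by rw [φY, hb, hv]
  have hbbv : Q (b*b) v = -(b*v) := by
    rw [hleib, hbv]
    linear_combination (-(b*v)) * hμ2
  have huuv : Q (u*u) v = 0 := by rw [hleib, huv0]; ring
  have hbbb : Q (b*b) b = 0 := by rw [hleib, hbb]; ring
  have huub : Q (u*u) b = -(u*u) := by
    rw [hleib, hub]
    linear_combination (-(u*u)) * hμ2
  refine ⟨?_, ?_, ?_⟩
  · rw [hφS, hφX, hφY, map_add, LinearMap.add_apply, hbbv, huuv, add_zero]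
  · rw [hφS, hφY, hφX, map_neg, hleib2 b v, map_add, LinearMap.add_apply,
      LinearMap.add_apply, hbbv, huuv, hbbb, huub]
    ring
  · rw [hφX, hφY, map_neg, hleib2 b v v, hvv, hvb, hsm]
    ring
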